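/- Let G be a finite group acting transitively on a finite type ι via a homomorphism μ : G →* Equiv.Perm ι. Let V : ι → Type be a family of finite-dimensional complex vector spaces and let ρ be a representation of G on the direct sum ⊕_{i ∈ ι} V i such that for every g ∈ G and i ∈ ι, ρ g maps the summand V i into the summand V (μ g i). Fix i₀ ∈ ι, let H be the stabilizer of i₀ in G, and let W = V i₀ equipped with the H-representation obtained by restricting ρ to H (which preserves V i₀). Then the G-representation ⊕_{i ∈ ι} V i is isomorphic to the induced representation Ind_H^G W = ℂ[G] ⊗_{ℂ[H]} W. -/

import Mathlib

open scoped TensorProduct DirectSum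

/-- The stabilizer of `i₀` under a permutation action `μ : G →* Equiv.Perm ι`. -/
def permStabilizer {G ι : Type} [Group G] (μ : G →* Equiv.Perm ι) (i₀ : ι) :
    Subgroup G where
  carrier := {g : G | μ g i₀ = i₀}
  one_mem' := by simp
  mul_mem' := by
    intro a b ha hb
    simp only [Set.mem_setOf_eq, map_mul, Equiv.Perm.mul_apply] at *
    rw [hb, ha]
  inv_mem' := by
    intro a ha
    simp only [Set.mem_setOf_eq, map_inv] at *
    exact (Equiv.Perm.inv_eq_iff_eq).mpr ha.symm

/-- The balancing relations defining `ℂ[G] ⊗_{ℂ[H]} W` as a quotient of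
`ℂ[G] ⊗[ℂ] W`, for `H` the stabilizer of `i₀` and `σ` the `H`-representation
on `W`. -/
noncomputable def indRel {G ι : Type} [Group G] (μ : G →* Equiv.Perm ι) (i₀ : ι)
    {W : Type} [AddCommGroup W] [Module ℂ W]
    (σ : Representation ℂ (permStabilizer μ i₀) W) :
    Submodule ℂ (MonoidAlgebra ℂ G ⊗[ℂ] W) :=
  Submodule.span ℂ
    {z | ∃ (x : MonoidAlgebra ℂ G) (h : permStabilizer μ i₀) (w : W),
      z = (x * MonoidAlgebra.of ℂ G (h : G)) ⊗ₜ[ℂ] w - x ⊗ₜ[ℂ] (σ h w)}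

/-- The underlying space of the induced representation
`Ind_H^G W = ℂ[G] ⊗_{ℂ[H]} W`. -/
def IndSpace {G ι : Type} [Group G] (μ : G →* Equiv.Perm ι) (i₀ : ι)
    {W : Type} [AddCommGroup W] [Module ℂ W]
    (σ : Representation ℂ (permStabilizer μ i₀) W) : Type :=
  (MonoidAlgebra ℂ G ⊗[ℂ] W) ⧸ indRel μ i₀ σ

noncomputable instance {G ι : Type} [Group G] (μ : G →* Equiv.Perm ι) (i₀ : ι)
    {W : Type} [AddCommGroup W] [Module ℂ W]
    (σ : Representation ℂ (permStabilizer μ i₀) W) :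
    AddCommGroup (IndSpace μ i₀ σ) :=
  inferInstanceAs (AddCommGroup ((MonoidAlgebra ℂ G ⊗[ℂ] W) ⧸ indRel μ i₀ σ))

noncomputable instance {G ι : Type} [Group G] (μ : G →* Equiv.Perm ι) (i₀ : ι)
    {W : Type} [AddCommGroup W] [Module ℂ W]
    (σ : Representation ℂ (permStabilizer μ i₀) W) :
    Module ℂ (IndSpace μ i₀ σ) :=
  inferInstanceAs (Module ℂ ((MonoidAlgebra ℂ G ⊗[ℂ] W) ⧸ indRel μ i₀ σ))

section MyAux

variable {G ι : Type} [Group G] [Fintype ι] [DecidableEq ι]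
  {V : ι → Type} [∀ i, AddCommGroup (V i)] [∀ i, Module ℂ (V i)]

/-- bilinear map underlying Φ -/
noncomputable def myPhiBil (ρ : Representation ℂ G (⨁ i, V i)) (i₀ : ι) :
    MonoidAlgebra ℂ G →ₗ[ℂ] (V i₀ →ₗ[ℂ] ⨁ i, V i) where
  toFun x := (ρ.asAlgebraHom x) ∘ₗ DirectSum.lof ℂ ι V i₀
  map_add' x y := by simp [map_add, LinearMap.add_comp]
  map_smul' c x := by simp [map_smul, LinearMap.smul_comp]

noncomputable def myPhi (ρ : Representation ℂ G (⨁ i, V i)) (i₀ : ι) :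
    MonoidAlgebra ℂ G ⊗[ℂ] V i₀ →ₗ[ℂ] ⨁ i, V i :=
  TensorProduct.lift (myPhiBil ρ i₀)

@[simp] lemma myPhi_tmul (ρ : Representation ℂ G (⨁ i, V i)) (i₀ : ι)
    (x : MonoidAlgebra ℂ G) (w : V i₀) :
    myPhi ρ (i₀ := i₀) (x ⊗ₜ w) = ρ.asAlgebraHom x (DirectSum.lof ℂ ι V i₀ w) := rfl

lemma myPhi_vanish (μ : G →* Equiv.Perm ι) (i₀ : ι)
    (ρ : Representation ℂ G (⨁ i, V i))
    (σ : Representation ℂ (permStabilizer μ i₀) (V i₀))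
    (hσ : ∀ (h : permStabilizer μ i₀) (v : V i₀),
      ρ (h : G) (DirectSum.lof ℂ ι V i₀ v) = DirectSum.lof ℂ ι V i₀ (σ h v)) :
    indRel μ i₀ σ ≤ LinearMap.ker (myPhi ρ i₀) := by
  rw [indRel, Submodule.span_le]
  rintro z ⟨x, h, w, rfl⟩
  simp only [SetLike.mem_coe, LinearMap.mem_ker, map_sub, myPhi_tmul, map_mul,
    Module.End.mul_apply, Representation.asAlgebraHom_of, hσ, sub_self]

/-- left multiplication on first tensor factor -/
noncomputable def myLmul (g : G) {W : Type} [AddCommGroup W] [Module ℂ W] :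
    MonoidAlgebra ℂ G ⊗[ℂ] W →ₗ[ℂ] MonoidAlgebra ℂ G ⊗[ℂ] W :=
  LinearMap.rTensor W (LinearMap.mulLeft ℂ (MonoidAlgebra.of ℂ G g))

@[simp] lemma myLmul_tmul (g : G) {W : Type} [AddCommGroup W] [Module ℂ W]
    (x : MonoidAlgebra ℂ G) (w : W) :
    myLmul g (x ⊗ₜ w) = (MonoidAlgebra.of ℂ G g * x) ⊗ₜ w := rfl

lemma myLmul_rel (μ : G →* Equiv.Perm ι) (i₀ : ι)
    {W : Type} [AddCommGroup W] [Module ℂ W]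
    (σ : Representation ℂ (permStabilizer μ i₀) W) (g : G) :
    indRel μ i₀ σ ≤ (indRel μ i₀ σ).comap (myLmul g) := by
  rw [indRel, Submodule.span_le]
  rintro z ⟨x, h, w, rfl⟩
  simp only [SetLike.mem_coe, Submodule.mem_comap, map_sub, myLmul_tmul]
  rw [← mul_assoc]
  exact Submodule.subset_span ⟨MonoidAlgebra.of ℂ G g * x, h, w, rfl⟩

noncomputable def myRhoInd (μ : G →* Equiv.Perm ι) (i₀ : ι)
    {W : Type} [AddCommGroup W] [Module ℂ W]
    (σ : Representation ℂ (permStabilizer μ i₀) W) :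
    Representation ℂ G (IndSpace μ i₀ σ) where
  toFun g := Submodule.mapQ _ _ (myLmul g) (myLmul_rel μ i₀ σ g)
  map_one' := by
    apply Submodule.linearMap_qext
    apply TensorProduct.ext'
    intro x w
    simp only [LinearMap.coe_comp, Function.comp_apply, Submodule.mkQ_apply,
      Submodule.mapQ_apply, myLmul_tmul, Module.End.one_eq_id, LinearMap.id_coe, id_eq]
    rw [map_one, one_mul]
    rfl
  map_mul' g g' := by
    apply Submodule.linearMap_qext
    apply TensorProduct.ext'
    intro x w
    change Submodule.Quotient.mk ((MonoidAlgebra.of ℂ G (g * g') * x) ⊗ₜ[ℂ] w) =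
      Submodule.Quotient.mk
        ((MonoidAlgebra.of ℂ G g * (MonoidAlgebra.of ℂ G g' * x)) ⊗ₜ[ℂ] w)
    rw [map_mul, mul_assoc]

@[simp] lemma myRhoInd_mkQ (μ : G →* Equiv.Perm ι) (i₀ : ι)
    {W : Type} [AddCommGroup W] [Module ℂ W]
    (σ : Representation ℂ (permStabilizer μ i₀) W) (g : G)
    (x : MonoidAlgebra ℂ G) (w : W) :
    myRhoInd μ i₀ σ g ((indRel μ i₀ σ).mkQ (x ⊗ₜ[ℂ] w)) =
      (indRel μ i₀ σ).mkQ ((MonoidAlgebra.of ℂ G g * x) ⊗ₜ[ℂ] w) := by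
  show Submodule.mapQ _ _ (myLmul g) (myLmul_rel μ i₀ σ g) _ = _
  rw [Submodule.mkQ_apply, Submodule.mapQ_apply, myLmul_tmul, Submodule.mkQ_apply]

end MyAux

section MyAux2

variable {G ι : Type} [Group G] [Fintype ι] [DecidableEq ι]
  {V : ι → Type} [∀ i, AddCommGroup (V i)] [∀ i, Module ℂ (V i)]

noncomputable def myPsi (μ : G →* Equiv.Perm ι) (i₀ : ι)
    (ρ : Representation ℂ G (⨁ i, V i))
    (σ : Representation ℂ (permStabilizer μ i₀) (V i₀))
    (gsel : ι → G) : (⨁ i, V i) →ₗ[ℂ] IndSpace μ i₀ σ :=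
  DirectSum.toModule ℂ ι _ fun i =>
    (indRel μ i₀ σ).mkQ ∘ₗ
      (TensorProduct.mk ℂ (MonoidAlgebra ℂ G) (V i₀)
        (MonoidAlgebra.of ℂ G (gsel i))) ∘ₗ
      DirectSum.component ℂ ι V i₀ ∘ₗ (ρ (gsel i)⁻¹) ∘ₗ DirectSum.lof ℂ ι V i

@[simp] lemma myPsi_lof (μ : G →* Equiv.Perm ι) (i₀ : ι)
    (ρ : Representation ℂ G (⨁ i, V i))
    (σ : Representation ℂ (permStabilizer μ i₀) (V i₀))
    (gsel : ι → G) (i : ι) (v : V i) :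
    myPsi μ i₀ ρ σ gsel (DirectSum.lof ℂ ι V i v) =
      (indRel μ i₀ σ).mkQ
        (MonoidAlgebra.of ℂ G (gsel i) ⊗ₜ[ℂ]
          DirectSum.component ℂ ι V i₀ (ρ (gsel i)⁻¹ (DirectSum.lof ℂ ι V i v))) := by
  rw [myPsi, DirectSum.toModule_lof]
  rfl

lemma my_inv_block (μ : G →* Equiv.Perm ι)
    (ρ : Representation ℂ G (⨁ i, V i))
    (hblock : ∀ (g : G) (i : ι) (v : V i), ∃ w : V (μ g i),
      ρ g (DirectSum.lof ℂ ι V i v) = DirectSum.lof ℂ ι V (μ g i) w)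
    (g : G) (i j : ι) (hji : μ g j = i) (v : V i) :
    ∃ w : V j, ρ g⁻¹ (DirectSum.lof ℂ ι V i v) = DirectSum.lof ℂ ι V j w := by
  have hj : μ g⁻¹ i = j := by
    rw [map_inv]
    exact (Equiv.Perm.inv_eq_iff_eq).mpr hji.symm
  subst hj
  exact hblock g⁻¹ i v

lemma my_rho_inv_cancel (ρ : Representation ℂ G (⨁ i, V i)) (g : G)
    (x : ⨁ i, V i) : ρ g (ρ g⁻¹ x) = x := by
  rw [← Module.End.mul_apply, ← map_mul, mul_inv_cancel, map_one, Module.End.one_apply]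

end MyAux2

/-- If a finite group `G` acts transitively on the blocks of a direct sum
`⨁ i, V i` via `μ`, permuting the summands (`ρ g` maps `V i` into `V (μ g i)`),
and `σ` is the representation of the stabilizer `H` of `i₀` on `W = V i₀`
obtained by restricting `ρ`, then `⨁ i, V i` is `G`-equivariantly isomorphic to
the induced representation `Ind_H^G W = ℂ[G] ⊗_{ℂ[H]} W`, where the `G`-action
on the latter is by left multiplication on the first tensor factor. -/
theorem directSum_iso_induced {G ι : Type} [Group G] [Fintype G] [Fintype ι]
    [DecidableEq ι]
    (μ : G →* Equiv.Perm ι) (htrans : ∀ i j : ι, ∃ g : G, μ g i = j)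
    (V : ι → Type) [∀ i, AddCommGroup (V i)] [∀ i, Module ℂ (V i)]
    [∀ i, FiniteDimensional ℂ (V i)]
    (ρ : Representation ℂ G (⨁ i, V i))
    (hblock : ∀ (g : G) (i : ι) (v : V i), ∃ w : V (μ g i),
      ρ g (DirectSum.lof ℂ ι V i v) = DirectSum.lof ℂ ι V (μ g i) w)
    (i₀ : ι)
    (σ : Representation ℂ (permStabilizer μ i₀) (V i₀))
    (hσ : ∀ (h : permStabilizer μ i₀) (v : V i₀),
      ρ (h : G) (DirectSum.lof ℂ ι V i₀ v) = DirectSum.lof ℂ ι V i₀ (σ h v)) :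
    ∃ (ρInd : Representation ℂ G (IndSpace μ i₀ σ))
      (e : (⨁ i, V i) ≃ₗ[ℂ] IndSpace μ i₀ σ),
      (∀ (g : G) (x : MonoidAlgebra ℂ G) (w : V i₀),
        ρInd g ((indRel μ i₀ σ).mkQ (x ⊗ₜ[ℂ] w)) =
          (indRel μ i₀ σ).mkQ ((MonoidAlgebra.of ℂ G g * x) ⊗ₜ[ℂ] w)) ∧
      (∀ (g : G) (v : ⨁ i, V i), e (ρ g v) = ρInd g (e v)) := by
  classical
  choose gsel hgsel using fun i => htrans i₀ i
  set Φ : IndSpace μ i₀ σ →ₗ[ℂ] ⨁ i, V i :=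
    (indRel μ i₀ σ).liftQ (myPhi ρ i₀) (myPhi_vanish μ i₀ ρ σ hσ) with hΦ
  set Ψ : (⨁ i, V i) →ₗ[ℂ] IndSpace μ i₀ σ := myPsi μ i₀ ρ σ gsel with hΨ
  have hΦmk : ∀ t, Φ ((indRel μ i₀ σ).mkQ t) = myPhi ρ i₀ t := fun t => rfl
  -- Φ ∘ Ψ = id
  have h2 : Φ ∘ₗ Ψ = LinearMap.id := by
    apply DirectSum.linearMap_ext
    intro i
    apply LinearMap.ext
    intro v
    simp only [LinearMap.comp_apply, LinearMap.id_apply, hΨ, myPsi_lof]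
    obtain ⟨u, hu⟩ := my_inv_block μ ρ hblock (gsel i) i i₀ (hgsel i) v
    rw [hu, DirectSum.component.lof_self, hΦmk, myPhi_tmul,
      Representation.asAlgebraHom_of, ← hu, my_rho_inv_cancel]
  -- Ψ ∘ Φ = id (pointwise on pure tensors first)
  have hΨΦ : ∀ (x : MonoidAlgebra ℂ G) (w : V i₀),
      Ψ (myPhi ρ i₀ (x ⊗ₜ[ℂ] w)) = (indRel μ i₀ σ).mkQ (x ⊗ₜ[ℂ] w) := by
    intro x
    induction x using MonoidAlgebra.induction_on with
    | of g =>
      intro w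
      rw [myPhi_tmul, Representation.asAlgebraHom_of]
      obtain ⟨u, hu⟩ := hblock g i₀ w
      rw [hu, hΨ, myPsi_lof]
      have hmem : (gsel (μ g i₀))⁻¹ * g ∈ permStabilizer μ i₀ := by
        show μ ((gsel (μ g i₀))⁻¹ * g) i₀ = i₀
        rw [map_mul, Equiv.Perm.mul_apply, map_inv]
        exact (Equiv.Perm.inv_eq_iff_eq).mpr (hgsel (μ g i₀)).symm
      set h : permStabilizer μ i₀ := ⟨(gsel (μ g i₀))⁻¹ * g, hmem⟩ with hh
      have key : ρ (gsel (μ g i₀))⁻¹ (DirectSum.lof ℂ ι V (μ g i₀) u) =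
          DirectSum.lof ℂ ι V i₀ (σ h w) := by
        rw [← hu, ← Module.End.mul_apply, ← map_mul]
        exact hσ h w
      rw [key, DirectSum.component.lof_self]
      rw [Submodule.mkQ_apply, Submodule.mkQ_apply]
      refine (Submodule.Quotient.eq _).mpr ?_
      have hg : MonoidAlgebra.of ℂ G g =
          MonoidAlgebra.of ℂ G (gsel (μ g i₀)) * MonoidAlgebra.of ℂ G (h : G) := by
        rw [← map_mul]
        congr 1
        rw [hh]
        simp
      rw [hg]
      have hgen : (MonoidAlgebra.of ℂ G (gsel (μ g i₀)) * MonoidAlgebra.of ℂ G (h : G))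
            ⊗ₜ[ℂ] w - MonoidAlgebra.of ℂ G (gsel (μ g i₀)) ⊗ₜ[ℂ] (σ h w) ∈
          indRel μ i₀ σ :=
        Submodule.subset_span ⟨MonoidAlgebra.of ℂ G (gsel (μ g i₀)), h, w, rfl⟩
      have := (indRel μ i₀ σ).neg_mem hgen
      rwa [neg_sub] at this
    | add f g hf hg =>
      intro w
      simp only [TensorProduct.add_tmul, map_add, hf, hg]
      rfl
    | smul r f hf =>
      intro w
      rw [← TensorProduct.smul_tmul', map_smul, map_smul, hf, map_smul]
      rfl
  have h1 : Ψ ∘ₗ Φ = LinearMap.id := by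
    apply Submodule.linearMap_qext
    apply LinearMap.ext
    intro z
    induction z using TensorProduct.induction_on with
    | zero => simp only [map_zero]
    | tmul x w =>
      show Ψ (Φ ((indRel μ i₀ σ).mkQ (x ⊗ₜ[ℂ] w))) = _
      rw [hΦmk, hΨΦ]
      rfl
    | add a b ha hb =>
      simp only [LinearMap.comp_apply, map_add] at ha hb ⊢
      rw [ha, hb]
  -- equivariance of Φ
  have hequiv : ∀ (g : G) (z : IndSpace μ i₀ σ),
      Φ (myRhoInd μ i₀ σ g z) = ρ g (Φ z) := by
    intro g z
    obtain ⟨t, rfl⟩ := Submodule.mkQ_surjective _ z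
    induction t using TensorProduct.induction_on with
    | zero => rw [map_zero]; erw [map_zero, map_zero]
    | tmul x w =>
      rw [myRhoInd_mkQ, hΦmk, hΦmk, myPhi_tmul, myPhi_tmul, map_mul,
        Module.End.mul_apply, Representation.asAlgebraHom_of]
    | add a b ha hb =>
      rw [map_add]
      erw [map_add, map_add, ha, hb, map_add]
      exact (map_add _ _ _).symm
  set e : (⨁ i, V i) ≃ₗ[ℂ] IndSpace μ i₀ σ := LinearEquiv.ofLinear Ψ Φ h1 h2 with he
  refine ⟨myRhoInd μ i₀ σ, e, fun g x w => myRhoInd_mkQ μ i₀ σ g x w, ?_⟩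
  intro g v
  apply e.symm.injective
  rw [LinearEquiv.symm_apply_apply, he, LinearEquiv.ofLinear_symm_apply, hequiv,
    LinearEquiv.ofLinear_apply]
  have hv : Φ (Ψ v) = v := LinearMap.congr_fun h2 v
  rw [hv]
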